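/- arXiv:2302.14194 — 2 statements merged into one kernel-verified Lean document; each statement's English description precedes it below -/
import Mathlib

section
/- Let d ≥ 1 and let p, q : Fin (d+1) → EuclideanSpace ℝ (Fin d) be two affinely independent families of points (so conv(range p) and conv(range q) are d-dimensional simplices). Assume: (1) 0 ∈ interior (convexHull ℝ (Set.range q)); (2) ‖q i − q j‖ ≤ ‖p i − p j‖ for all i, j; (3) ‖p i‖ ≤ ‖q i‖ for all i. Then there exists a linear isometry equivalence T : EuclideanSpace ℝ (Fin d) ≃ₗᵢ EuclideanSpace ℝ (Fin d) with T (p i) = q i for all i. -/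
open Finset RealInnerProductSpace

lemma aux_identity {m n : ℕ} (w : Fin n → ℝ) (v : Fin n → EuclideanSpace ℝ (Fin m))
    (hw : ∑ i, w i = 1) :
    ∑ i, ∑ j, w i * w j * ‖v i - v j‖ ^ 2
      = 2 * ∑ i, w i * ‖v i‖ ^ 2 - 2 * ‖∑ i, w i • v i‖ ^ 2 := by
  have e3 : ‖∑ i, w i • v i‖ ^ 2 = ∑ i, ∑ j, w i * (w j * ⟪v i, v j⟫) := by
    rw [← real_inner_self_eq_norm_sq]
    simp only [sum_inner, real_inner_smul_left, inner_sum, real_inner_smul_right,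
      Finset.mul_sum]
    exact sum_congr rfl fun i _ => sum_congr rfl fun j _ => by rw [real_inner_comm]
  have hS1 : ∑ i, ∑ j, w i * w j * ‖v i‖ ^ 2 = ∑ i, w i * ‖v i‖ ^ 2 := by
    refine sum_congr rfl fun i _ => ?_
    calc ∑ j, w i * w j * ‖v i‖ ^ 2 = (w i * ‖v i‖ ^ 2) * ∑ j, w j := by
          rw [Finset.mul_sum]; exact sum_congr rfl fun j _ => by ring
      _ = w i * ‖v i‖ ^ 2 := by rw [hw, mul_one]
  have hS2 : ∑ i, ∑ j, w i * w j * ‖v j‖ ^ 2 = ∑ j, w j * ‖v j‖ ^ 2 := by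
    rw [Finset.sum_comm]
    refine sum_congr rfl fun j _ => ?_
    calc ∑ i, w i * w j * ‖v j‖ ^ 2 = (w j * ‖v j‖ ^ 2) * ∑ i, w i := by
          rw [Finset.mul_sum]; exact sum_congr rfl fun i _ => by ring
      _ = w j * ‖v j‖ ^ 2 := by rw [hw, mul_one]
  have e1 : ∑ i, ∑ j, w i * w j * ‖v i - v j‖ ^ 2
      = (∑ i, ∑ j, w i * w j * ‖v i‖ ^ 2) + (∑ i, ∑ j, w i * w j * ‖v j‖ ^ 2)
          - 2 * (∑ i, ∑ j, w i * (w j * ⟪v i, v j⟫)) := by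
    rw [Finset.mul_sum, ← Finset.sum_add_distrib, ← Finset.sum_sub_distrib]
    refine sum_congr rfl fun i _ => ?_
    rw [Finset.mul_sum, ← Finset.sum_add_distrib, ← Finset.sum_sub_distrib]
    refine sum_congr rfl fun j _ => ?_
    rw [norm_sub_sq_real]; ring
  rw [e1, hS1, hS2, e3]; ring

theorem simplex_rigidity (d : ℕ) (hd : 1 ≤ d)
    (p q : Fin (d + 1) → EuclideanSpace ℝ (Fin d))
    (hp : AffineIndependent ℝ p) (hq : AffineIndependent ℝ q)
    (h0 : (0 : EuclideanSpace ℝ (Fin d)) ∈ interior (convexHull ℝ (Set.range q)))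
    (hedge : ∀ i j, ‖q i - q j‖ ≤ ‖p i - p j‖)
    (hvert : ∀ i, ‖p i‖ ≤ ‖q i‖) :
    ∃ T : EuclideanSpace ℝ (Fin d) ≃ₗᵢ[ℝ] EuclideanSpace ℝ (Fin d),
      ∀ i, T (p i) = q i := by
  classical
  have hfr : Module.finrank ℝ (EuclideanSpace ℝ (Fin d)) = d := finrank_euclideanSpace_fin
  have hspan : affineSpan ℝ (Set.range q) = ⊤ := by
    rw [hq.affineSpan_eq_top_iff_card_eq_finrank_add_one]
    simp [hfr]
  let b : AffineBasis (Fin (d+1)) ℝ (EuclideanSpace ℝ (Fin d)) := ⟨q, hq, hspan⟩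
  set w : Fin (d+1) → ℝ := fun i => b.coord i 0 with hwdef
  have hwpos : ∀ i, 0 < w i := by
    rw [show Set.range q = Set.range b from rfl, b.interior_convexHull] at h0
    exact h0
  have hwsum : ∑ i, w i = 1 := b.sum_coord_apply_eq_one 0
  have hwq : ∑ i, w i • q i = 0 := b.linear_combination_coord_eq_self 0
  -- the key inequality chain
  set s : EuclideanSpace ℝ (Fin d) := ∑ i, w i • p i with hsdef
  have hwnn : ∀ i, 0 ≤ w i := fun i => (hwpos i).le
  have hedge2 : ∀ i j : Fin (d+1), w i * w j * ‖q i - q j‖ ^ 2 ≤ w i * w j * ‖p i - p j‖ ^ 2 := by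
    intro i j
    have := pow_le_pow_left₀ (norm_nonneg _) (hedge i j) 2
    exact mul_le_mul_of_nonneg_left this (mul_nonneg (hwnn i) (hwnn j))
  have hvert2 : ∀ i : Fin (d+1), w i * ‖p i‖ ^ 2 ≤ w i * ‖q i‖ ^ 2 := fun i =>
    mul_le_mul_of_nonneg_left (pow_le_pow_left₀ (norm_nonneg _) (hvert i) 2) (hwnn i)
  have hq_id := aux_identity w q hwsum
  have hp_id := aux_identity w p hwsum
  rw [hwq, norm_zero] at hq_id
  have hsumedge : ∑ i, ∑ j, w i * w j * ‖q i - q j‖ ^ 2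
      ≤ ∑ i, ∑ j, w i * w j * ‖p i - p j‖ ^ 2 :=
    sum_le_sum fun i _ => sum_le_sum fun j _ => hedge2 i j
  have hsumvert : ∑ i, w i * ‖p i‖ ^ 2 ≤ ∑ i, w i * ‖q i‖ ^ 2 :=
    sum_le_sum fun i _ => hvert2 i
  have hs0 : s = 0 := by
    rw [← hsdef] at hp_id
    have h1 : ‖s‖ ^ 2 ≤ 0 := by nlinarith [sq_nonneg ‖s‖]
    have := sq_nonneg ‖s‖
    have : ‖s‖ ^ 2 = 0 := le_antisymm h1 this
    simpa [pow_eq_zero_iff] using this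
  rw [← hsdef, hs0, norm_zero] at hp_id
  -- equalities
  have hvert_eq : ∀ i, w i * ‖p i‖ ^ 2 = w i * ‖q i‖ ^ 2 := by
    have hsum_eq : ∑ i, w i * ‖p i‖ ^ 2 = ∑ i, w i * ‖q i‖ ^ 2 := by nlinarith
    intro i
    exact (Finset.sum_eq_sum_iff_of_le (fun i _ => hvert2 i)).mp hsum_eq i (mem_univ i)
  have hedge_eqsum : ∑ i, ∑ j, w i * w j * ‖q i - q j‖ ^ 2
      = ∑ i, ∑ j, w i * w j * ‖p i - p j‖ ^ 2 := by nlinarith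
  have hedge_eq : ∀ i j, w i * w j * ‖q i - q j‖ ^ 2 = w i * w j * ‖p i - p j‖ ^ 2 := by
    intro i j
    have h1 := (Finset.sum_eq_sum_iff_of_le
      (fun i _ => sum_le_sum fun j _ => hedge2 i j)).mp hedge_eqsum i (mem_univ i)
    exact (Finset.sum_eq_sum_iff_of_le (fun j _ => hedge2 i j)).mp h1 j (mem_univ j)
  have hnorm_eq : ∀ i, ‖p i‖ ^ 2 = ‖q i‖ ^ 2 := fun i =>
    mul_left_cancel₀ (hwpos i).ne' (hvert_eq i)
  have hdist_eq : ∀ i j, ‖q i - q j‖ ^ 2 = ‖p i - p j‖ ^ 2 := fun i j =>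
    mul_left_cancel₀ (mul_pos (hwpos i) (hwpos j)).ne' (hedge_eq i j)
  have hinner : ∀ i j, ⟪p i, p j⟫ = ⟪q i, q j⟫ := by
    intro i j
    have h1 := norm_sub_sq_real (p i) (p j)
    have h2 := norm_sub_sq_real (q i) (q j)
    have := hdist_eq i j
    have := hnorm_eq i
    have := hnorm_eq j
    linarith
  -- linear independence of p 1, ..., p d
  have hpw : ∑ i, w i • p i = 0 := hsdef ▸ hs0
  have hli : LinearIndependent ℝ (fun j : Fin d => p j.succ) := by
    rw [Fintype.linearIndependent_iff]
    intro c hc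
    set c' : Fin (d+1) → ℝ := Fin.cons 0 c with hc'def
    set t : ℝ := ∑ j, c j with htdef
    have hc'sum : ∑ i, c' i = t := by
      rw [Fin.sum_univ_succ]
      simp [hc'def, htdef]
    have hc'p : ∑ i, c' i • p i = 0 := by
      rw [Fin.sum_univ_succ]
      simpa [hc'def] using hc
    set u : Fin (d+1) → ℝ := fun i => t * w i - c' i with hudef
    have husum : ∑ i, u i = 0 := by
      simp only [hudef, Finset.sum_sub_distrib, ← Finset.mul_sum, hwsum, hc'sum, mul_one,
        sub_self]
    have hup : ∑ i, u i • p i = 0 := by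
      simp only [hudef, sub_smul, mul_smul, Finset.sum_sub_distrib, ← Finset.smul_sum, hpw,
        hc'p, smul_zero, sub_self]
    have hu0 : ∀ i ∈ Finset.univ, u i = 0 :=
      (affineIndependent_iff.mp hp) Finset.univ u husum hup
    have ht : t = 0 := by
      have h1 := hu0 0 (mem_univ 0)
      simp only [hudef, hc'def, Fin.cons_zero, sub_zero] at h1
      exact (mul_eq_zero.mp h1).resolve_right (hwpos 0).ne'
    intro j
    have h2 := hu0 j.succ (mem_univ j.succ)
    simp only [hudef, hc'def, Fin.cons_succ, ht, zero_mul, zero_sub, neg_eq_zero] at h2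
    exact h2
  haveI : Nonempty (Fin d) := ⟨⟨0, hd⟩⟩
  let B : Module.Basis (Fin d) ℝ (EuclideanSpace ℝ (Fin d)) :=
    basisOfLinearIndependentOfCardEqFinrank hli (by simp [hfr])
  have hB : ∀ j : Fin d, B j = p j.succ := fun j =>
    congrFun (coe_basisOfLinearIndependentOfCardEqFinrank hli _) j
  let f : EuclideanSpace ℝ (Fin d) →ₗ[ℝ] EuclideanSpace ℝ (Fin d) :=
    B.constr ℝ (fun j => q j.succ)
  have hfB : ∀ j : Fin d, f (p j.succ) = q j.succ := by
    intro j
    rw [← hB j]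
    exact B.constr_basis ℝ _ j
  have hfinner : ∀ x y : EuclideanSpace ℝ (Fin d), ⟪f x, f y⟫ = ⟪x, y⟫ := by
    intro x y
    conv_lhs => rw [← B.sum_repr x, ← B.sum_repr y]
    conv_rhs => rw [← B.sum_repr x, ← B.sum_repr y]
    simp only [map_sum, map_smul, sum_inner, inner_sum, real_inner_smul_left,
      real_inner_smul_right]
    refine sum_congr rfl fun i _ => sum_congr rfl fun j _ => ?_
    rw [hB i, hB j, hfB i, hfB j, hinner]
  let li : EuclideanSpace ℝ (Fin d) →ₗᵢ[ℝ] EuclideanSpace ℝ (Fin d) :=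
    f.isometryOfInner hfinner
  refine ⟨li.toLinearIsometryEquiv rfl, ?_⟩
  have hli_eq : ∀ x, li.toLinearIsometryEquiv rfl x = f x := fun x => rfl
  have hfp : ∀ i, f (p i) = q i := by
    have hq0 : w 0 • q 0 = -∑ j : Fin d, w j.succ • q j.succ := by
      rw [Fin.sum_univ_succ] at hwq
      exact eq_neg_of_add_eq_zero_left hwq
    have hp0 : w 0 • p 0 = -∑ j : Fin d, w j.succ • p j.succ := by
      rw [Fin.sum_univ_succ] at hpw
      exact eq_neg_of_add_eq_zero_left hpw
    intro i
    refine Fin.cases ?_ (fun j => hfB j) i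
    have hkey : w 0 • f (p 0) = w 0 • q 0 := by
      rw [← map_smul, hp0, hq0, map_neg, map_sum]
      simp only [map_smul, hfB]
    exact smul_right_injective _ (hwpos 0).ne' hkey
  intro i
  rw [hli_eq]
  exact hfp i
end

section
/- Let M : Matrix (Fin n) (Fin n) ℝ be symmetric with exactly one positive eigenvalue θ (counted with multiplicity in the list of n real eigenvalues of M), the positive eigenvalue having multiplicity one, and let z : Fin n → ℝ be an eigenvector of M for the eigenvalue θ. Let X : Matrix (Fin n) (Fin e) ℝ satisfy Matrix.vecMul z X = 0 (i.e. every column of X is orthogonal to z). Then Matrix.trace (M * X * Xᵀ) ≤ 0, and equality Matrix.trace (M * X * Xᵀ) = 0 holds if and only if M * X = 0. -/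
open Matrix in
theorem trace_nonpos {n e : ℕ}
    (M : Matrix (Fin n) (Fin n) ℝ) (hM : M.IsHermitian)
    (θ : ℝ) (hθ : 0 < θ)
    (hMeig : (Finset.univ.filter fun i => 0 < hM.eigenvalues i).card = 1)
    (z : Fin n → ℝ) (hz : z ≠ 0) (hzeig : M.mulVec z = θ • z)
    (X : Matrix (Fin n) (Fin e) ℝ) (hX : Matrix.vecMul z X = 0) :
    Matrix.trace (M * X * Xᵀ) ≤ 0 ∧
      (Matrix.trace (M * X * Xᵀ) = 0 ↔ M * X = 0) := by
  classical
  set U : Matrix (Fin n) (Fin n) ℝ := (hM.eigenvectorUnitary : Matrix (Fin n) (Fin n) ℝ)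
    with hUdef
  set D : Matrix (Fin n) (Fin n) ℝ := Matrix.diagonal hM.eigenvalues with hDdef
  have hUU : star U * U = 1 := Unitary.coe_star_mul_self hM.eigenvectorUnitary
  have hUU' : U * star U = 1 := Unitary.coe_mul_star_self hM.eigenvectorUnitary
  have hspec : M = U * D * star U := by
    have h := hM.spectral_theorem
    rwa [RCLike.ofReal_real_eq_id, Function.id_comp] at h
  set Y : Matrix (Fin n) (Fin e) ℝ := star U * X with hYdef
  have hMX : M * X = U * (D * Y) := by
    rw [hspec, hYdef]; simp only [Matrix.mul_assoc]
  have hDY : star U * (M * X) = D * Y := by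
    rw [hMX, ← Matrix.mul_assoc, hUU, Matrix.one_mul]
  have hYT : Yᵀ = Xᵀ * U := by
    rw [hYdef, Matrix.star_eq_conjTranspose, Matrix.conjTranspose_eq_transpose_of_trivial,
      Matrix.transpose_mul, Matrix.transpose_transpose]
  have htr : Matrix.trace (M * X * Xᵀ) = ∑ i, hM.eigenvalues i * ∑ j, Y i j ^ 2 := by
    have hkey : M * X * Xᵀ = U * (D * (Y * Yᵀ)) * star U := by
      rw [hMX, hYT]
      simp only [Matrix.mul_assoc, hUU', Matrix.mul_one]
    rw [hkey, Matrix.trace_mul_cycle, ← Matrix.mul_assoc, hUU, Matrix.one_mul]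
    rw [Matrix.trace]
    refine Finset.sum_congr rfl fun i _ => ?_
    rw [Matrix.diag_apply, hDdef, Matrix.diagonal_mul]
    rw [Matrix.mul_apply]
    congr 1
    refine Finset.sum_congr rfl fun j _ => ?_
    rw [Matrix.transpose_apply]; ring
  obtain ⟨i₀, hi₀⟩ := Finset.card_eq_one.mp hMeig
  have hneg : ∀ i, i ≠ i₀ → hM.eigenvalues i ≤ 0 := by
    intro i hi
    by_contra h
    push_neg at h
    have : i ∈ Finset.univ.filter fun i => 0 < hM.eigenvalues i := by simp [h]
    rw [hi₀, Finset.mem_singleton] at this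
    exact hi this
  set w : Fin n → ℝ := Matrix.mulVec (star U) z with hwdef
  have hzw : z = Matrix.mulVec U w := by
    rw [hwdef, Matrix.mulVec_mulVec, hUU', Matrix.one_mulVec]
  have hsm : star U * M = D * star U := by
    rw [hspec, ← Matrix.mul_assoc, ← Matrix.mul_assoc, hUU, Matrix.one_mul]
  have hDw : ∀ i, hM.eigenvalues i * w i = θ * w i := by
    have h : Matrix.mulVec D w = θ • w := by
      rw [hwdef, Matrix.mulVec_mulVec, ← hsm, ← Matrix.mulVec_mulVec, hzeig,
        Matrix.mulVec_smul]
    intro i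
    have := congrFun h i
    simpa [hDdef, Matrix.mulVec_diagonal] using this
  have hwz : ∀ i, i ≠ i₀ → w i = 0 := by
    intro i hi
    rcases mul_eq_mul_right_iff.mp (hDw i) with h | h
    · exact absurd h (by linarith [hneg i hi])
    · exact h
  have hwi₀ : w i₀ ≠ 0 := by
    intro h
    apply hz
    rw [hzw]
    have hw0 : w = 0 := by
      ext i
      by_cases hi : i = i₀
      · rw [hi]; exact h
      · exact hwz i hi
    rw [hw0, Matrix.mulVec_zero]
  have hYrow : ∀ j, Y i₀ j = 0 := by
    intro j
    have hXj : ∑ k, z k * X k j = 0 := by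
      have := congrFun hX j
      simpa [Matrix.vecMul, dotProduct] using this
    have hzk : ∀ k, z k = U k i₀ * w i₀ := by
      intro k
      have hk : z k = ∑ i, U k i * w i := by rw [hzw]; rfl
      rw [hk, Finset.sum_eq_single i₀]
      · intro b _ hb; rw [hwz b hb, mul_zero]
      · simp
    have hmul : w i₀ * ∑ k, U k i₀ * X k j = 0 := by
      rw [Finset.mul_sum, ← hXj]
      refine Finset.sum_congr rfl fun k _ => ?_
      rw [hzk k]; ring
    have h2 : ∑ k, U k i₀ * X k j = 0 := by
      rcases mul_eq_zero.mp hmul with h | h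
      · exact absurd h hwi₀
      · exact h
    rw [hYdef, Matrix.mul_apply]
    simp only [Matrix.star_apply, star_trivial]
    simpa [mul_comm] using h2
  have hterm : ∀ i, hM.eigenvalues i * ∑ j, Y i j ^ 2 ≤ 0 := by
    intro i
    by_cases hi : i = i₀
    · subst hi
      have h0 : ∑ j, Y i j ^ 2 = 0 :=
        Finset.sum_eq_zero fun j _ => by rw [hYrow j]; ring
      simp [h0]
    · exact mul_nonpos_of_nonpos_of_nonneg (hneg i hi)
        (Finset.sum_nonneg fun j _ => sq_nonneg _)
  have h1 : Matrix.trace (M * X * Xᵀ) ≤ 0 := by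
    rw [htr]; exact Finset.sum_nonpos fun i _ => hterm i
  refine ⟨h1, ?_, ?_⟩
  · intro h0
    rw [htr] at h0
    have hall := (Finset.sum_eq_zero_iff_of_nonpos fun i _ => hterm i).mp h0
    have hDY0 : D * Y = 0 := by
      ext i j
      rw [hDdef, Matrix.diagonal_mul, Matrix.zero_apply]
      by_cases hi : i = i₀
      · subst hi; rw [hYrow j, mul_zero]
      · rcases mul_eq_zero.mp (hall i (Finset.mem_univ i)) with h | h
        · rw [h, zero_mul]
        · have hY0 : Y i j = 0 := by
            have := (Finset.sum_eq_zero_iff_of_nonneg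
              (fun j _ => sq_nonneg (Y i j))).mp h j (Finset.mem_univ j)
            exact pow_eq_zero_iff (by norm_num) |>.mp this
          rw [hY0, mul_zero]
    rw [hMX, hDY0, Matrix.mul_zero]
  · intro h0
    rw [h0, Matrix.zero_mul, Matrix.trace_zero]
end
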